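/- Let (X, d) be a metric space and let S be a finite set of 2m points in X (m ≥ 1). Let e_1 = {x_1, y_1}, ..., e_m = {x_m, y_m} be any perfect matching of S into m disjoint pairs. Then the sum of all pairwise distances within S, counting each unordered pair once, is at least m · Σ_{i=1}^m d(x_i, y_i). -/
import Mathlib


/-- For a set `S` of `2m` points with a perfect matching `{x i, y i}`,
the sum of all pairwise distances (each unordered pair counted once) is at least
`m` times the total weight of the matching. -/
theorem stmt_1 {X : Type*} [MetricSpace X] [DecidableEq X] (m : ℕ) (hm : 1 ≤ m)
    (x y : Fin m → X)
    (hinj : Function.Injective (Sum.elim x y : Fin m ⊕ Fin m → X))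
    (S : Finset X)
    (hS : S = Finset.image x Finset.univ ∪ Finset.image y Finset.univ) :
    (m : ℝ) * ∑ i, dist (x i) (y i) ≤ (∑ u ∈ S, ∑ v ∈ S, dist u v) / 2 := by
  set f : Fin m ⊕ Fin m → X := Sum.elim x y with hf
  have hSimg : S = Finset.image f Finset.univ := by
    rw [hS]
    ext u
    simp [hf, Sum.exists]
  have hdouble : (∑ u ∈ S, ∑ v ∈ S, dist u v)
      = ∑ p : Fin m ⊕ Fin m, ∑ q : Fin m ⊕ Fin m, dist (f p) (f q) := by
    rw [hSimg, Finset.sum_image (fun a _ b _ h => hinj h)]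
    refine Finset.sum_congr rfl fun p _ => ?_
    rw [Finset.sum_image (fun a _ b _ h => hinj h)]
  have key : ((2 * m : ℕ) : ℝ) * ∑ i, dist (x i) (y i)
      ≤ ∑ p : Fin m ⊕ Fin m, ∑ q : Fin m ⊕ Fin m, dist (f p) (f q) := by
    calc ((2 * m : ℕ) : ℝ) * ∑ i, dist (x i) (y i)
        = ∑ _p : Fin m ⊕ Fin m, ∑ i, dist (x i) (y i) := by
          rw [Finset.sum_const, nsmul_eq_mul]
          simp [two_mul]
      _ ≤ ∑ p : Fin m ⊕ Fin m, ∑ i, (dist (x i) (f p) + dist (f p) (y i)) := by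
          refine Finset.sum_le_sum fun p _ => Finset.sum_le_sum fun i _ => ?_
          exact dist_triangle _ _ _
      _ = ∑ p : Fin m ⊕ Fin m, ∑ q : Fin m ⊕ Fin m, dist (f p) (f q) := by
          refine Finset.sum_congr rfl fun p _ => ?_
          rw [Fintype.sum_sum_type]
          simp [hf, Finset.sum_add_distrib, dist_comm]
  rw [hdouble, le_div_iff₀ (by norm_num : (0:ℝ) < 2)]
  calc (m : ℝ) * (∑ i, dist (x i) (y i)) * 2
      = ((2 * m : ℕ) : ℝ) * ∑ i, dist (x i) (y i) := by push_cast; ring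
    _ ≤ _ := key
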